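/- arXiv:1803.03702 — 3 statements merged into one kernel-verified Lean document; each statement's English description precedes it below -/
import Mathlib

section
/- Let ρ, ρ′, C be real numbers with C > 0, let n and m be positive integers, and let b, d : ℕ → ℝ be nonnegative sequences with b(0) > 0 and d(0) > 0 such that for every real t > 0 the series ∑_{k=0}^∞ b(k)·e^{−2πtk/n} and ∑_{k=0}^∞ d(k)·e^{−2πtk/m} converge. If e^{−2πtρ′}·∑_{k=0}^∞ b(k)·e^{−2πtk/n} ≤ C·e^{−2πtρ}·∑_{k=0}^∞ d(k)·e^{−2πtk/m} for all t > 0, then ρ′ ≥ ρ, and if ρ′ = ρ then b(0) ≤ C·d(0). -/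
open Real

set_option maxHeartbeats 1000000

/-- Comparison of two exponential series: if
`exp (-2πtρ') * ∑ b k * exp (-2πtk/n) ≤ C * exp (-2πtρ) * ∑ d k * exp (-2πtk/m)`
for all `t > 0`, where `b, d` are nonnegative with positive leading
coefficients, then `ρ' ≥ ρ`, and `b 0 ≤ C * d 0` if `ρ' = ρ`. -/
theorem stmt_4 (ρ ρ' C : ℝ) (hC : 0 < C) (n m : ℕ) (hn : 0 < n) (hm : 0 < m)
    (b d : ℕ → ℝ) (hb : ∀ k, 0 ≤ b k) (hd : ∀ k, 0 ≤ d k)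
    (hb0 : 0 < b 0) (hd0 : 0 < d 0)
    (hbs : ∀ t : ℝ, 0 < t → Summable fun k : ℕ => b k * Real.exp (-2 * π * t * k / n))
    (hds : ∀ t : ℝ, 0 < t → Summable fun k : ℕ => d k * Real.exp (-2 * π * t * k / m))
    (hle : ∀ t : ℝ, 0 < t →
      Real.exp (-2 * π * t * ρ') * ∑' k : ℕ, b k * Real.exp (-2 * π * t * k / n) ≤
      C * (Real.exp (-2 * π * t * ρ) * ∑' k : ℕ, d k * Real.exp (-2 * π * t * k / m))) :
    ρ ≤ ρ' ∧ (ρ' = ρ → b 0 ≤ C * d 0) := by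
  have hm' : (0:ℝ) < m := by exact_mod_cast hm
  have hπ : (0:ℝ) < π := Real.pi_pos
  set S : ℝ := ∑' k : ℕ, d k * Real.exp (-2 * π * 1 * k / m) with hSdef
  have hS0 : 0 ≤ S := tsum_nonneg fun k => mul_nonneg (hd k) (Real.exp_pos _).le
  -- lower bound for the b-series
  have hblow : ∀ t : ℝ, 0 < t →
      b 0 ≤ ∑' k : ℕ, b k * Real.exp (-2 * π * t * k / n) := by
    intro t ht
    have h := Summable.le_tsum (hbs t ht) 0 (fun k _ => mul_nonneg (hb k) (Real.exp_pos _).le)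
    simpa using h
  -- upper bound for the d-series
  have hdup : ∀ t : ℝ, 1 ≤ t →
      (∑' k : ℕ, d k * Real.exp (-2 * π * t * k / m)) ≤
        d 0 + Real.exp (-2 * π * (t - 1) / m) * S := by
    intro t ht
    have ht0 : (0:ℝ) < t := lt_of_lt_of_le one_pos ht
    have hsum := hds t ht0
    have hsum1 := hds 1 one_pos
    have hshift : Summable fun k : ℕ => d (k + 1) * Real.exp (-2 * π * t * (↑(k + 1)) / m) :=
      (summable_nat_add_iff 1).mpr hsum
    have hshift1 : Summable fun k : ℕ => d (k + 1) * Real.exp (-2 * π * 1 * (↑(k + 1)) / m) :=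
      (summable_nat_add_iff 1).mpr hsum1
    have h0 : (∑' k : ℕ, d k * Real.exp (-2 * π * t * k / m))
        = d 0 + ∑' k : ℕ, d (k + 1) * Real.exp (-2 * π * t * (↑(k + 1)) / m) := by
      rw [Summable.tsum_eq_zero_add hsum]
      congr 1
      simp
    have hterm : ∀ k : ℕ, d (k + 1) * Real.exp (-2 * π * t * (↑(k + 1)) / m)
        ≤ Real.exp (-2 * π * (t - 1) / m) *
            (d (k + 1) * Real.exp (-2 * π * 1 * (↑(k + 1)) / m)) := by
      intro k
      have h1 : Real.exp (-2 * π * t * (↑(k + 1)) / m)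
          ≤ Real.exp (-2 * π * (t - 1) / m) * Real.exp (-2 * π * 1 * (↑(k + 1)) / m) := by
        rw [← Real.exp_add]
        apply Real.exp_le_exp.mpr
        rw [← add_div, div_le_div_iff₀ hm' hm']
        have hk : (0:ℝ) ≤ (k : ℝ) := Nat.cast_nonneg k
        push_cast
        nlinarith [mul_nonneg (mul_nonneg hπ.le (sub_nonneg.mpr ht)) hk, hm']
      calc d (k + 1) * Real.exp (-2 * π * t * (↑(k + 1)) / m)
          ≤ d (k + 1) * (Real.exp (-2 * π * (t - 1) / m) *
              Real.exp (-2 * π * 1 * (↑(k + 1)) / m)) :=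
            mul_le_mul_of_nonneg_left h1 (hd _)
        _ = Real.exp (-2 * π * (t - 1) / m) *
              (d (k + 1) * Real.exp (-2 * π * 1 * (↑(k + 1)) / m)) := by ring
    have htail : (∑' k : ℕ, d (k + 1) * Real.exp (-2 * π * t * (↑(k + 1)) / m))
        ≤ Real.exp (-2 * π * (t - 1) / m) *
            ∑' k : ℕ, d (k + 1) * Real.exp (-2 * π * 1 * (↑(k + 1)) / m) := by
      rw [← tsum_mul_left]
      exact Summable.tsum_le_tsum hterm hshift (hshift1.mul_left _)
    have htail1 : (∑' k : ℕ, d (k + 1) * Real.exp (-2 * π * 1 * (↑(k + 1)) / m)) ≤ S := by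
      rw [hSdef, Summable.tsum_eq_zero_add hsum1]
      have : 0 ≤ d 0 * Real.exp (-2 * π * 1 * (0:ℕ) / m) :=
        mul_nonneg (hd 0) (Real.exp_pos _).le
      push_cast at this ⊢
      linarith
    have := mul_le_mul_of_nonneg_left htail1 (Real.exp_pos (-2 * π * (t - 1) / m)).le
    rw [h0]
    linarith
  -- the key inequality
  have key : ∀ t : ℝ, 1 ≤ t →
      b 0 ≤ C * Real.exp (2 * π * t * (ρ' - ρ)) *
        (d 0 + Real.exp (-2 * π * (t - 1) / m) * S) := by
    intro t ht
    have ht0 : (0:ℝ) < t := lt_of_lt_of_le one_pos ht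
    have h1 := hle t ht0
    have h2 : Real.exp (-2 * π * t * ρ') * b 0 ≤
        Real.exp (-2 * π * t * ρ') * ∑' k : ℕ, b k * Real.exp (-2 * π * t * k / n) :=
      mul_le_mul_of_nonneg_left (hblow t ht0) (Real.exp_pos _).le
    have h3 : C * (Real.exp (-2 * π * t * ρ) * ∑' k : ℕ, d k * Real.exp (-2 * π * t * k / m))
        ≤ C * (Real.exp (-2 * π * t * ρ) *
            (d 0 + Real.exp (-2 * π * (t - 1) / m) * S)) := by
      apply mul_le_mul_of_nonneg_left _ hC.le
      exact mul_le_mul_of_nonneg_left (hdup t ht) (Real.exp_pos _).le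
    have h4 : Real.exp (-2 * π * t * ρ') * b 0 ≤
        C * (Real.exp (-2 * π * t * ρ) *
          (d 0 + Real.exp (-2 * π * (t - 1) / m) * S)) := le_trans h2 (le_trans h1 h3)
    have h5 := mul_le_mul_of_nonneg_left h4 (Real.exp_pos (2 * π * t * ρ')).le
    have e1 : Real.exp (2 * π * t * ρ') * (Real.exp (-2 * π * t * ρ') * b 0) = b 0 := by
      rw [← mul_assoc, ← Real.exp_add, show (2 * π * t * ρ' + -2 * π * t * ρ') = 0 by ring,
        Real.exp_zero, one_mul]
    have e2 : Real.exp (2 * π * t * ρ') * (C * (Real.exp (-2 * π * t * ρ) *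
        (d 0 + Real.exp (-2 * π * (t - 1) / m) * S)))
        = C * Real.exp (2 * π * t * (ρ' - ρ)) *
            (d 0 + Real.exp (-2 * π * (t - 1) / m) * S) := by
      rw [show (2 * π * t * (ρ' - ρ)) = 2 * π * t * ρ' + -2 * π * t * ρ by ring, Real.exp_add]
      ring
    rw [e1, e2] at h5
    exact h5
  constructor
  · -- ρ ≤ ρ'
    by_contra hlt
    push_neg at hlt
    have hδ : ρ' - ρ < 0 := by linarith
    have hbd : ∀ t : ℝ, 1 ≤ t →
        b 0 ≤ C * Real.exp (2 * π * t * (ρ' - ρ)) * (d 0 + S) := by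
      intro t ht
      have h1 := key t ht
      have hE : Real.exp (-2 * π * (t - 1) / m) ≤ 1 := by
        apply Real.exp_le_one_iff.mpr
        apply div_nonpos_of_nonpos_of_nonneg _ hm'.le
        nlinarith
      have h2 : d 0 + Real.exp (-2 * π * (t - 1) / m) * S ≤ d 0 + S := by
        nlinarith
      have h3 := mul_le_mul_of_nonneg_left h2
        (mul_nonneg hC.le (Real.exp_pos (2 * π * t * (ρ' - ρ))).le)
      calc b 0 ≤ C * Real.exp (2 * π * t * (ρ' - ρ))
            * (d 0 + Real.exp (-2 * π * (t - 1) / ↑m) * S) := h1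
        _ = C * Real.exp (2 * π * t * (ρ' - ρ))
            * (d 0 + Real.exp (-2 * π * (t - 1) / ↑m) * S) := rfl
        _ ≤ C * Real.exp (2 * π * t * (ρ' - ρ)) * (d 0 + S) := by
            exact h3
    have htend : Filter.Tendsto
        (fun t : ℝ => C * Real.exp (2 * π * t * (ρ' - ρ)) * (d 0 + S))
        Filter.atTop (nhds 0) := by
      have h1 : Filter.Tendsto (fun t : ℝ => 2 * π * t * (ρ' - ρ)) Filter.atTop Filter.atBot := by
        have : Filter.Tendsto (fun t : ℝ => (2 * π * (ρ' - ρ)) * t) Filter.atTop Filter.atBot :=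
          Filter.Tendsto.const_mul_atTop_of_neg (by nlinarith) Filter.tendsto_id
        convert this using 2 with t
        ring
      have h2 : Filter.Tendsto (fun t : ℝ => Real.exp (2 * π * t * (ρ' - ρ)))
          Filter.atTop (nhds 0) := Real.tendsto_exp_atBot.comp h1
      have h3 := (h2.const_mul C).mul_const (d 0 + S)
      simpa using h3
    have hle0 : b 0 ≤ 0 := by
      refine ge_of_tendsto htend ?_
      filter_upwards [Filter.eventually_ge_atTop (1:ℝ)] with t ht using hbd t ht
    linarith
  · -- equality case
    intro heq
    have hbd : ∀ t : ℝ, 1 ≤ t →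
        b 0 ≤ C * (d 0 + Real.exp (-2 * π * (t - 1) / m) * S) := by
      intro t ht
      have h1 := key t ht
      rw [heq] at h1
      simpa using h1
    have htend : Filter.Tendsto
        (fun t : ℝ => C * (d 0 + Real.exp (-2 * π * (t - 1) / m) * S))
        Filter.atTop (nhds (C * d 0)) := by
      have h1 : Filter.Tendsto (fun t : ℝ => -2 * π * (t - 1) / m) Filter.atTop Filter.atBot := by
        have h0 : Filter.Tendsto (fun t : ℝ => t - 1) Filter.atTop Filter.atTop :=
          Filter.tendsto_atTop_add_const_right _ (-1) Filter.tendsto_id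
        have : Filter.Tendsto (fun t : ℝ => (-2 * π / m) * (t - 1)) Filter.atTop Filter.atBot :=
          Filter.Tendsto.const_mul_atTop_of_neg
            (div_neg_of_neg_of_pos (by nlinarith) hm') h0
        convert this using 2 with t
        ring
      have h2 : Filter.Tendsto (fun t : ℝ => Real.exp (-2 * π * (t - 1) / m))
          Filter.atTop (nhds 0) := Real.tendsto_exp_atBot.comp h1
      have h3 := ((h2.mul_const S).const_add (d 0)).const_mul C
      simpa using h3
    refine ge_of_tendsto htend ?_
    filter_upwards [Filter.eventually_ge_atTop (1:ℝ)] with t ht using hbd t ht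
end

section
/- Let c, ρ, ρ′ ∈ ℝ, let n be a positive integer, let λ be a nonzero complex number, and let a : ℕ → ℂ and d, b : ℕ → ℝ satisfy: |a(k)| ≤ d(k) and b(k) ≥ 0 for all k ∈ ℕ, d(0) > 0, and b(0) > 0. Assume that for every real t > 0 the series ∑_{k=0}^∞ d(k)·e^{−2πtk} and ∑_{k=0}^∞ b(k)·e^{−2πtk/n} converge, and that the following two identities hold for all real t > 0: (untwisted) e^{2π(c/24−ρ)/t}·∑_{k=0}^∞ d(k)·e^{−2πk/t} = e^{2πt(c/24−ρ)}·∑_{k=0}^∞ d(k)·e^{−2πtk}, and (twisted) e^{2π(c/24−ρ)/t}·∑_{k=0}^∞ a(k)·e^{−2πk/t} = λ·e^{2πt(c/24−ρ′)}·∑_{k=0}^∞ b(k)·e^{−2πtk/n}. Then ρ′ ≥ ρ, and if ρ′ = ρ then |λ|·b(0) ≤ d(0). -/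
open Real Filter

/-- The analytic core of the main theorem: given the untwisted and twisted
modular-invariance identities on the imaginary axis, the twisted conformal
weight `ρ'` satisfies `ρ' ≥ ρ`, and `|λ| * b 0 ≤ d 0` if `ρ' = ρ`. -/
theorem stmt_5 (c ρ ρ' : ℝ) (n : ℕ) (hn : 0 < n) (lam : ℂ) (hlam : lam ≠ 0)
    (a : ℕ → ℂ) (d b : ℕ → ℝ)
    (had : ∀ k, ‖a k‖ ≤ d k) (hb : ∀ k, 0 ≤ b k)
    (hd0 : 0 < d 0) (hb0 : 0 < b 0)
    (hds : ∀ t : ℝ, 0 < t → Summable fun k : ℕ => d k * Real.exp (-2 * π * t * k))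
    (hbs : ∀ t : ℝ, 0 < t → Summable fun k : ℕ => b k * Real.exp (-2 * π * t * k / n))
    (huntw : ∀ t : ℝ, 0 < t →
      Real.exp (2 * π * (c / 24 - ρ) / t) *
          ∑' k : ℕ, d k * Real.exp (-2 * π * k / t) =
        Real.exp (2 * π * t * (c / 24 - ρ)) *
          ∑' k : ℕ, d k * Real.exp (-2 * π * t * k))
    (htw : ∀ t : ℝ, 0 < t →
      (Real.exp (2 * π * (c / 24 - ρ) / t) : ℂ) *
          ∑' k : ℕ, a k * (Real.exp (-2 * π * k / t) : ℂ) =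
        lam * (Real.exp (2 * π * t * (c / 24 - ρ')) : ℂ) *
          ((∑' k : ℕ, b k * Real.exp (-2 * π * t * k / n) : ℝ) : ℂ)) :
    ρ ≤ ρ' ∧ (ρ' = ρ → ‖lam‖ * b 0 ≤ d 0) := by
  have two_pi_pos : (0:ℝ) < 2 * π := by positivity
  have hd : ∀ k, 0 ≤ d k := fun k => (norm_nonneg _).trans (had k)
  -- key inequality for all t > 0
  have key : ∀ t : ℝ, 0 < t →
      ‖lam‖ * (∑' k : ℕ, b k * Real.exp (-2 * π * t * k / n)) *
        Real.exp (2 * π * t * (ρ - ρ')) ≤ ∑' k : ℕ, d k * Real.exp (-2 * π * t * k) := by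
    intro t ht
    have hBnn : 0 ≤ ∑' k : ℕ, b k * Real.exp (-2 * π * t * k / n) :=
      tsum_nonneg fun k => mul_nonneg (hb k) (Real.exp_pos _).le
    have hsumd : Summable fun k : ℕ => d k * Real.exp (-2 * π * (k:ℝ) / t) := by
      have h := hds t⁻¹ (by positivity)
      refine h.congr fun k => ?_
      congr 1
      ring
    have hnorm : ∀ k : ℕ, ‖a k * (Real.exp (-2 * π * (k:ℝ) / t) : ℂ)‖ ≤
        d k * Real.exp (-2 * π * (k:ℝ) / t) := by
      intro k
      rw [norm_mul, Complex.norm_real, Real.norm_eq_abs, Real.abs_exp]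
      exact mul_le_mul_of_nonneg_right (had k) (Real.exp_pos _).le
    have hsuma : Summable fun k : ℕ => ‖a k * (Real.exp (-2 * π * (k:ℝ) / t) : ℂ)‖ :=
      Summable.of_nonneg_of_le (fun k => norm_nonneg _) hnorm hsumd
    have habs : ‖(∑' k : ℕ, a k * (Real.exp (-2 * π * (k:ℝ) / t) : ℂ))‖ ≤
        ∑' k : ℕ, d k * Real.exp (-2 * π * (k:ℝ) / t) := by
      exact (norm_tsum_le_tsum_norm hsuma).trans (Summable.tsum_le_tsum hnorm hsuma hsumd)
    have h2 := congrArg (norm : ℂ → ℝ) (htw t ht)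
    rw [norm_mul, norm_mul, norm_mul, Complex.norm_real, Complex.norm_real, Complex.norm_real,
      Real.norm_eq_abs, Real.norm_eq_abs, Real.norm_eq_abs,
      abs_of_pos (Real.exp_pos _), abs_of_pos (Real.exp_pos _), abs_of_nonneg hBnn] at h2
    have h3 : ‖lam‖ * Real.exp (2 * π * t * (c/24 - ρ')) *
        (∑' k : ℕ, b k * Real.exp (-2 * π * t * k / n)) ≤
        Real.exp (2 * π * t * (c/24 - ρ)) * ∑' k : ℕ, d k * Real.exp (-2 * π * t * k) := by
      rw [← huntw t ht, ← h2]
      exact mul_le_mul_of_nonneg_left habs (Real.exp_pos _).le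
    have hE : Real.exp (2 * π * t * (c/24 - ρ')) =
        Real.exp (2 * π * t * (c/24 - ρ)) * Real.exp (2 * π * t * (ρ - ρ')) := by
      rw [← Real.exp_add]
      ring_nf
    rw [hE] at h3
    refine le_of_mul_le_mul_left ?_ (Real.exp_pos (2 * π * t * (c/24 - ρ)))
    calc Real.exp (2 * π * t * (c/24 - ρ)) *
          (‖lam‖ * (∑' k : ℕ, b k * Real.exp (-2 * π * t * k / n)) *
            Real.exp (2 * π * t * (ρ - ρ')))
        = ‖lam‖ *
            (Real.exp (2 * π * t * (c/24 - ρ)) * Real.exp (2 * π * t * (ρ - ρ'))) *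
            (∑' k : ℕ, b k * Real.exp (-2 * π * t * k / n)) := by ring
      _ ≤ _ := h3
  -- lower bound for B
  have hBge : ∀ t : ℝ, 0 < t → b 0 ≤ ∑' k : ℕ, b k * Real.exp (-2 * π * t * k / n) := by
    intro t ht
    have h := Summable.le_tsum (hbs t ht) 0 fun j _ => mul_nonneg (hb j) (Real.exp_pos _).le
    simpa using h
  -- tail bound for F
  set T : ℝ := ∑' k : ℕ, d (k + 1) * Real.exp (-2 * π * 1 * ((k:ℕ) + 1 : ℕ)) with hT
  have hT0 : 0 ≤ T := tsum_nonneg fun k => mul_nonneg (hd _) (Real.exp_pos _).le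
  have hF : ∀ t : ℝ, 1 ≤ t →
      (∑' k : ℕ, d k * Real.exp (-2 * π * t * k)) ≤ d 0 + Real.exp (-(2 * π * (t - 1))) * T := by
    intro t ht1
    have ht : (0:ℝ) < t := lt_of_lt_of_le one_pos ht1
    have hsum := hds t ht
    rw [Summable.tsum_eq_zero_add hsum]
    simp only [Nat.cast_zero, mul_zero, Real.exp_zero, mul_one]
    have hs1 : Summable fun k : ℕ => d (k + 1) * Real.exp (-2 * π * t * ((k:ℕ) + 1 : ℕ)) :=
      (summable_nat_add_iff 1).2 (hds t ht)
    have hs2 : Summable fun k : ℕ =>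
        Real.exp (-(2 * π * (t - 1))) * (d (k + 1) * Real.exp (-2 * π * 1 * ((k:ℕ) + 1 : ℕ))) :=
      ((summable_nat_add_iff 1).2 (hds 1 one_pos)).mul_left _
    have htail : (∑' k : ℕ, d (k + 1) * Real.exp (-2 * π * t * ((k:ℕ) + 1 : ℕ))) ≤
        Real.exp (-(2 * π * (t - 1))) * T := by
      rw [hT, ← tsum_mul_left]
      refine Summable.tsum_le_tsum (fun k => ?_) hs1 hs2
      have hk : (0:ℝ) ≤ (k:ℝ) := Nat.cast_nonneg k
      have hprod : 0 ≤ 2 * π * (k:ℝ) * (t - 1) :=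
        mul_nonneg (mul_nonneg two_pi_pos.le hk) (by linarith)
      have hexp : Real.exp (-2 * π * t * ((k:ℕ) + 1 : ℕ)) ≤
          Real.exp (-(2 * π * (t - 1))) * Real.exp (-2 * π * 1 * ((k:ℕ) + 1 : ℕ)) := by
        rw [← Real.exp_add]
        apply Real.exp_le_exp.2
        push_cast
        nlinarith [hprod]
      calc d (k + 1) * Real.exp (-2 * π * t * ((k:ℕ) + 1 : ℕ))
          ≤ d (k + 1) * (Real.exp (-(2 * π * (t - 1))) * Real.exp (-2 * π * 1 * ((k:ℕ) + 1 : ℕ))) :=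
            mul_le_mul_of_nonneg_left hexp (hd _)
        _ = Real.exp (-(2 * π * (t - 1))) * (d (k + 1) * Real.exp (-2 * π * 1 * ((k:ℕ) + 1 : ℕ))) := by
            ring
    linarith
  -- main inequality on [1, ∞)
  have main : ∀ t : ℝ, 1 ≤ t →
      ‖lam‖ * b 0 * Real.exp (2 * π * t * (ρ - ρ')) ≤
        d 0 + Real.exp (-(2 * π * (t - 1))) * T := by
    intro t ht1
    have ht : (0:ℝ) < t := lt_of_lt_of_le one_pos ht1
    calc ‖lam‖ * b 0 * Real.exp (2 * π * t * (ρ - ρ'))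
        ≤ ‖lam‖ * (∑' k : ℕ, b k * Real.exp (-2 * π * t * k / n)) *
            Real.exp (2 * π * t * (ρ - ρ')) :=
          mul_le_mul_of_nonneg_right
            (mul_le_mul_of_nonneg_left (hBge t ht) (norm_nonneg _))
            (Real.exp_pos _).le
      _ ≤ ∑' k : ℕ, d k * Real.exp (-2 * π * t * k) := key t ht
      _ ≤ d 0 + Real.exp (-(2 * π * (t - 1))) * T := hF t ht1
  have hlampos : 0 < ‖lam‖ * b 0 := mul_pos (norm_pos_iff.mpr hlam) hb0
  have hρ : ρ ≤ ρ' := by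
    by_contra hlt
    push_neg at hlt
    have hs : (0:ℝ) < 2 * π * (ρ - ρ') := by
      have : (0:ℝ) < ρ - ρ' := by linarith
      positivity
    have htend : Tendsto (fun t : ℝ => ‖lam‖ * b 0 * Real.exp (2 * π * t * (ρ - ρ')))
        atTop atTop := by
      refine Tendsto.const_mul_atTop hlampos ?_
      refine Real.tendsto_exp_atTop.comp ?_
      have heq : (fun t : ℝ => 2 * π * t * (ρ - ρ')) = fun t : ℝ => (2 * π * (ρ - ρ')) * t := by
        funext t; ring
      rw [heq]
      exact Tendsto.const_mul_atTop hs tendsto_id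
    obtain ⟨t, hgt, ht1⟩ := ((htend.eventually_gt_atTop (d 0 + T)).and (eventually_ge_atTop 1)).exists
    have h5 := main t ht1
    have h6 : Real.exp (-(2 * π * (t - 1))) * T ≤ T := by
      refine mul_le_of_le_one_left hT0 ?_
      rw [Real.exp_le_one_iff]
      nlinarith [two_pi_pos]
    linarith
  refine ⟨hρ, fun hρ' => ?_⟩
  subst hρ'
  have main' : ∀ t : ℝ, 1 ≤ t →
      ‖lam‖ * b 0 ≤ d 0 + Real.exp (-(2 * π * (t - 1))) * T := by
    intro t ht1
    have h := main t ht1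
    simpa using h
  have h7 : Tendsto (fun t : ℝ => 2 * π * (t - 1)) atTop atTop := by
    refine Tendsto.const_mul_atTop two_pi_pos ?_
    exact tendsto_atTop_add_const_right atTop (-1) tendsto_id |>.congr (fun x => by simp only [id_eq]; ring)
  have h8 : Tendsto (fun t : ℝ => Real.exp (-(2 * π * (t - 1)))) atTop (nhds 0) := by
    exact Real.tendsto_exp_neg_atTop_nhds_zero.comp h7
  have htendF : Tendsto (fun t : ℝ => d 0 + Real.exp (-(2 * π * (t - 1))) * T) atTop
      (nhds (d 0)) := by
    have := tendsto_const_nhds (x := d 0) (f := atTop (α := ℝ)) |>.add (h8.mul_const T)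
    simpa using this
  exact ge_of_tendsto htendF (eventually_atTop.2 ⟨1, main'⟩)
end

section
/- Let c, ρ′ ∈ ℝ, let n be a positive integer, let a : ℕ → ℂ, and let d, b : ℕ → ℕ be sequences of natural numbers with d(0) = 1, b(0) ≥ 1, and |a(k)| ≤ d(k) for all k ∈ ℕ. Assume that for every real t > 0 the series ∑_{k=0}^∞ d(k)·e^{−2πtk} and ∑_{k=0}^∞ b(k)·e^{−2πtk/n} converge, and that for all real t > 0: e^{2π(c/24)/t}·∑_{k=0}^∞ d(k)·e^{−2πk/t} = e^{2πt(c/24)}·∑_{k=0}^∞ d(k)·e^{−2πtk}, and e^{2π(c/24)/t}·∑_{k=0}^∞ a(k)·e^{−2πk/t} = e^{2πt(c/24−ρ′)}·∑_{k=0}^∞ b(k)·e^{−2πtk/n}. Then ρ′ ≥ 0, and if ρ′ = 0 then b(0) = 1. -/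
open Real

private lemma aux_exp_mono {t : ℝ} (ht : 1 ≤ t) (k : ℕ) :
    Real.exp (-2 * π * t * k) ≤ Real.exp (-2 * π * 1 * k) := by
  have hπ := Real.pi_pos
  have hk : (0:ℝ) ≤ (k:ℝ) := Nat.cast_nonneg k
  refine Real.exp_le_exp.2 ?_
  nlinarith [mul_nonneg (mul_nonneg hπ.le hk) (sub_nonneg.2 ht)]

private lemma aux_Dle {d : ℕ → ℕ}
    (hds : ∀ t : ℝ, 0 < t → Summable fun k : ℕ => (d k : ℝ) * Real.exp (-2 * π * t * k))
    {t : ℝ} (ht : 1 ≤ t) :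
    (∑' k : ℕ, (d k : ℝ) * Real.exp (-2 * π * t * k)) ≤
      ∑' k : ℕ, (d k : ℝ) * Real.exp (-2 * π * 1 * k) := by
  have ht0 : (0:ℝ) < t := lt_of_lt_of_le one_pos ht
  refine Summable.tsum_le_tsum (fun k => ?_) (hds t ht0) (hds 1 one_pos)
  exact mul_le_mul_of_nonneg_left (aux_exp_mono ht k) (Nat.cast_nonneg _)

/-- Analytic core of the Main Result: with `d 0 = 1`, `b 0 ≥ 1`,
`|a k| ≤ d k`, and the untwisted and twisted modular-invariance identities
(with `λ = 1` and `ρ = 0`) on the imaginary axis, one has `ρ' ≥ 0`, and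
`b 0 = 1` if `ρ' = 0`. -/
theorem stmt_9 (c ρ' : ℝ) (n : ℕ) (hn : 0 < n) (a : ℕ → ℂ) (d b : ℕ → ℕ)
    (hd0 : d 0 = 1) (hb0 : 1 ≤ b 0)
    (had : ∀ k, ‖a k‖ ≤ (d k : ℝ))
    (hds : ∀ t : ℝ, 0 < t → Summable fun k : ℕ => (d k : ℝ) * Real.exp (-2 * π * t * k))
    (hbs : ∀ t : ℝ, 0 < t → Summable fun k : ℕ => (b k : ℝ) * Real.exp (-2 * π * t * k / n))
    (huntw : ∀ t : ℝ, 0 < t →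
      Real.exp (2 * π * (c / 24) / t) *
          ∑' k : ℕ, (d k : ℝ) * Real.exp (-2 * π * k / t) =
        Real.exp (2 * π * t * (c / 24)) *
          ∑' k : ℕ, (d k : ℝ) * Real.exp (-2 * π * t * k))
    (htw : ∀ t : ℝ, 0 < t →
      (Real.exp (2 * π * (c / 24) / t) : ℂ) *
          ∑' k : ℕ, a k * (Real.exp (-2 * π * k / t) : ℂ) =
        (Real.exp (2 * π * t * (c / 24 - ρ')) : ℂ) *
          ((∑' k : ℕ, (b k : ℝ) * Real.exp (-2 * π * t * k / n) : ℝ) : ℂ)) :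
    0 ≤ ρ' ∧ (ρ' = 0 → b 0 = 1) := by
  have hπ := Real.pi_pos
  -- key inequality: b 0 ≤ exp(2πtρ') * D t for all t > 0
  have key : ∀ t : ℝ, 0 < t →
      (b 0 : ℝ) ≤ Real.exp (2 * π * t * ρ') *
        ∑' k : ℕ, (d k : ℝ) * Real.exp (-2 * π * t * k) := by
    intro t ht
    -- summability of the transformed d-series
    have hDinv : Summable fun k : ℕ => (d k : ℝ) * Real.exp (-2 * π * (k : ℝ) / t) := by
      have h := hds (1/t) (by positivity)
      refine h.congr fun k => ?_
      congr 1
      congr 1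
      field_simp
    -- summability of the a-series
    have hAsum : Summable fun k : ℕ => a k * (Real.exp (-2 * π * (k : ℝ) / t) : ℂ) := by
      refine Summable.of_norm (hDinv.of_nonneg_of_le (fun k => norm_nonneg _) fun k => ?_)
      rw [norm_mul, Complex.norm_real, Real.norm_eq_abs, abs_of_pos (Real.exp_pos _)]
      exact mul_le_mul_of_nonneg_right (had k) (Real.exp_pos _).le
    -- bound on the norm of the a-sum
    have hAbound : ‖∑' k : ℕ, a k * (Real.exp (-2 * π * (k : ℝ) / t) : ℂ)‖ ≤
        ∑' k : ℕ, (d k : ℝ) * Real.exp (-2 * π * (k : ℝ) / t) := by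
      refine (norm_tsum_le_tsum_norm hAsum.norm).trans ?_
      refine Summable.tsum_le_tsum (fun k => ?_) hAsum.norm hDinv
      rw [norm_mul, Complex.norm_real, Real.norm_eq_abs, abs_of_pos (Real.exp_pos _)]
      exact mul_le_mul_of_nonneg_right (had k) (Real.exp_pos _).le
    have hBnn : (0:ℝ) ≤ ∑' k : ℕ, (b k : ℝ) * Real.exp (-2 * π * t * k / n) :=
      tsum_nonneg fun k => by positivity
    -- take norms in the twisted identity
    have h1 : Real.exp (2 * π * t * (c / 24 - ρ')) *
          (∑' k : ℕ, (b k : ℝ) * Real.exp (-2 * π * t * k / n)) ≤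
        Real.exp (2 * π * (c / 24) / t) *
          ∑' k : ℕ, (d k : ℝ) * Real.exp (-2 * π * (k : ℝ) / t) := by
      have h := congrArg norm (htw t ht)
      simp only [norm_mul, Complex.norm_real, Real.norm_eq_abs] at h
      rw [abs_of_pos (Real.exp_pos _), abs_of_pos (Real.exp_pos _), abs_of_nonneg hBnn] at h
      calc Real.exp (2 * π * t * (c / 24 - ρ')) *
            (∑' k : ℕ, (b k : ℝ) * Real.exp (-2 * π * t * k / n))
          = Real.exp (2 * π * (c / 24) / t) *
              ‖∑' k : ℕ, a k * (Real.exp (-2 * π * (k : ℝ) / t) : ℂ)‖ := h.symm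
        _ ≤ _ := mul_le_mul_of_nonneg_left hAbound (Real.exp_pos _).le
    have h2 : Real.exp (2 * π * t * (c / 24 - ρ')) *
          (∑' k : ℕ, (b k : ℝ) * Real.exp (-2 * π * t * k / n)) ≤
        Real.exp (2 * π * t * (c / 24)) *
          ∑' k : ℕ, (d k : ℝ) * Real.exp (-2 * π * t * k) :=
      h1.trans_eq (huntw t ht)
    -- divide out the positive factor
    have h3 : (∑' k : ℕ, (b k : ℝ) * Real.exp (-2 * π * t * k / n)) ≤
        Real.exp (2 * π * t * ρ') * ∑' k : ℕ, (d k : ℝ) * Real.exp (-2 * π * t * k) := by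
      have hE := Real.exp_pos (2 * π * t * (c / 24 - ρ'))
      have h2' : Real.exp (2 * π * t * (c / 24 - ρ')) *
            (∑' k : ℕ, (b k : ℝ) * Real.exp (-2 * π * t * k / n)) ≤
          Real.exp (2 * π * t * (c / 24 - ρ')) *
            (Real.exp (2 * π * t * ρ') * ∑' k : ℕ, (d k : ℝ) * Real.exp (-2 * π * t * k)) := by
        refine h2.trans_eq ?_
        have hsum : 2 * π * t * (c / 24 - ρ') + 2 * π * t * ρ' = 2 * π * t * (c / 24) := by
          ring
        rw [← mul_assoc, ← Real.exp_add, hsum]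
      exact le_of_mul_le_mul_left h2' hE
    -- b 0 ≤ B
    have h4 : (b 0 : ℝ) ≤ ∑' k : ℕ, (b k : ℝ) * Real.exp (-2 * π * t * k / n) := by
      have h := Summable.le_tsum (hbs t ht) 0 fun j _ => by positivity
      calc (b 0 : ℝ) = (b 0 : ℝ) * Real.exp (-2 * π * t * ((0:ℕ):ℝ) / n) := by norm_num
        _ ≤ _ := h
    exact h4.trans h3
  -- first part: 0 ≤ ρ'
  have hρ : 0 ≤ ρ' := by
    by_contra hneg
    push_neg at hneg
    have hDt : ∀ t : ℝ, 1 ≤ t → (b 0 : ℝ) ≤ Real.exp (2 * π * t * ρ') *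
        ∑' k : ℕ, (d k : ℝ) * Real.exp (-2 * π * 1 * k) := by
      intro t ht
      have ht0 : (0:ℝ) < t := lt_of_lt_of_le one_pos ht
      exact (key t ht0).trans
        (mul_le_mul_of_nonneg_left (aux_Dle hds ht) (Real.exp_pos _).le)
    have hlim : Filter.Tendsto (fun t : ℝ => Real.exp (2 * π * t * ρ') *
        ∑' k : ℕ, (d k : ℝ) * Real.exp (-2 * π * 1 * k)) Filter.atTop (nhds 0) := by
      have h1 : Filter.Tendsto (fun t : ℝ => 2 * π * t * ρ') Filter.atTop Filter.atBot := by
        have h := (Filter.tendsto_id (α := ℝ)).atTop_mul_const_of_neg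
          (show 2 * π * ρ' < 0 by nlinarith) (l := Filter.atTop)
        refine h.congr' (Filter.Eventually.of_forall fun x => ?_)
        simp only [id]; ring
      have h2 : Filter.Tendsto (fun t : ℝ => Real.exp (2 * π * t * ρ'))
          Filter.atTop (nhds 0) := Real.tendsto_exp_atBot.comp h1
      simpa using h2.mul_const _
    have hle : (b 0 : ℝ) ≤ 0 :=
      ge_of_tendsto hlim ((Filter.eventually_ge_atTop (1:ℝ)).mono fun t ht => hDt t ht)
    have h1b : (1:ℝ) ≤ (b 0 : ℝ) := by exact_mod_cast hb0
    linarith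
  refine ⟨hρ, fun hρ0 => ?_⟩
  subst hρ0
  -- D t → 1 as t → ∞
  have hDlim : Filter.Tendsto
      (fun t : ℝ => ∑' k : ℕ, (d k : ℝ) * Real.exp (-2 * π * t * k))
      Filter.atTop (nhds 1) := by
    have h := tendsto_tsum_of_dominated_convergence
      (𝓕 := Filter.atTop) (f := fun (t : ℝ) (k : ℕ) => (d k : ℝ) * Real.exp (-2 * π * t * k))
      (g := fun k : ℕ => if k = 0 then 1 else 0)
      (bound := fun k : ℕ => (d k : ℝ) * Real.exp (-2 * π * 1 * k))
      (hds 1 one_pos)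
      (fun k => by
        rcases Nat.eq_zero_or_pos k with hk | hk
        · subst hk
          simp only [if_pos rfl, Nat.cast_zero, mul_zero, Real.exp_zero, mul_one, hd0,
            Nat.cast_one]
          exact tendsto_const_nhds
        · simp only [if_neg hk.ne']
          have h1 : Filter.Tendsto (fun t : ℝ => -2 * π * t * k) Filter.atTop Filter.atBot := by
            have hk' : (0:ℝ) < k := by exact_mod_cast hk
            have h := (Filter.tendsto_id (α := ℝ)).atTop_mul_const_of_neg
              (show -2 * π * (k:ℝ) < 0 by nlinarith) (l := Filter.atTop)
            refine h.congr' (Filter.Eventually.of_forall fun x => ?_)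
            simp only [id]; ring
          have h2 := Real.tendsto_exp_atBot.comp h1
          simpa using h2.const_mul (d k : ℝ))
      (by
        filter_upwards [Filter.eventually_ge_atTop (1:ℝ)] with t ht k
        rw [Real.norm_eq_abs, abs_of_nonneg (by positivity)]
        exact mul_le_mul_of_nonneg_left (aux_exp_mono ht k) (Nat.cast_nonneg _))
    simpa using h
  have hle : (b 0 : ℝ) ≤ 1 := by
    refine ge_of_tendsto hDlim ?_
    filter_upwards [Filter.eventually_gt_atTop (0:ℝ)] with t ht
    have h := key t ht
    rwa [mul_zero, Real.exp_zero, one_mul] at h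
  have hb1 : b 0 ≤ 1 := by exact_mod_cast hle
  omega
end
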